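/- arXiv:2601.10900 — 3 statements merged into one kernel-verified Lean document; each statement's English description precedes it below -/
import Mathlib

section
/- (Claim 1 in the stability proof.) Let Z and Z' be finite nonempty subsets of metric spaces, let γ ≥ 0, and suppose there exists a correspondence R between Z and Z' with distortion dis(R) ≤ 2γ. Then for every ε ≥ 0, β₀^{ε}(Z) ≥ β₀^{ε+2γ}(Z'), i.e., the number of connected components of the ε-neighborhood graph on Z is at least the number of connected components of the (ε+2γ)-neighborhood graph on Z'. -/
/-- The ε-neighborhood graph on a finite subset `Z` of a metric space (the
1-skeleton of the Vietoris-Rips complex of `Z` at radius `ε`): edges join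
distinct points at distance at most `ε`. -/
def nbhdGraph {X : Type*} [MetricSpace X] (Z : Finset X) (ε : ℝ) :
    SimpleGraph {x // x ∈ Z} where
  Adj a b := a ≠ b ∧ dist a b ≤ ε
  symm := by
    constructor
    intro a b h
    exact ⟨h.1.symm, by rw [dist_comm]; exact h.2⟩
  loopless := by
    constructor
    intro a h
    exact h.1 rfl

/-- The 0-th Betti number of `Z` at radius `ε`: the number of connected
components of the ε-neighborhood graph. -/
noncomputable def betti0 {X : Type*} [MetricSpace X] (Z : Finset X) (ε : ℝ) : ℕ :=
  Nat.card (nbhdGraph Z ε).ConnectedComponent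

/-- `R` is a correspondence between `Z` and `Z'`: a relation contained in
`Z × Z'` such that every point of `Z` is related to some point of `Z'` and
vice versa. -/
def IsCorrespondence {X Y : Type*} [MetricSpace X] [MetricSpace Y]
    (Z : Finset X) (Z' : Finset Y) (R : Set (X × Y)) : Prop :=
  (∀ p ∈ R, p.1 ∈ Z ∧ p.2 ∈ Z') ∧
  (∀ z ∈ Z, ∃ z' ∈ Z', (z, z') ∈ R) ∧
  (∀ z' ∈ Z', ∃ z ∈ Z, (z, z') ∈ R)

/-- The distortion of a relation `R`:
`dis(R) = sup {|dist z₁ z₂ - dist z₁' z₂'| : (z₁, z₁') ∈ R, (z₂, z₂') ∈ R}`. -/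
noncomputable def distortion {X Y : Type*} [MetricSpace X] [MetricSpace Y]
    (R : Set (X × Y)) : ℝ :=
  sSup {c : ℝ | ∃ p ∈ R, ∃ q ∈ R, c = |dist p.1 q.1 - dist p.2 q.2|}


/-- Claim 1 in the stability proof: if there is a correspondence between `Z`
and `Z'` of distortion at most `2γ`, then `β₀^ε(Z) ≥ β₀^{ε+2γ}(Z')` for every
`ε ≥ 0`. -/
theorem betti0_claim_one {X Y : Type*} [MetricSpace X] [MetricSpace Y]
    (Z : Finset X) (Z' : Finset Y) (hZ : Z.Nonempty) (hZ' : Z'.Nonempty)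
    (γ : ℝ) (hγ : 0 ≤ γ)
    (hcor : ∃ R : Set (X × Y), IsCorrespondence Z Z' R ∧ distortion R ≤ 2 * γ) :
    ∀ ε : ℝ, 0 ≤ ε → betti0 Z' (ε + 2 * γ) ≤ betti0 Z ε := by
  intro ε hε
  obtain ⟨R, ⟨hR1, hR2, hR3⟩, hdis⟩ := hcor
  -- R is finite
  have hRfin : R.Finite := by
    apply Set.Finite.subset (Set.finite_coe_iff.mp inferInstance :
      ((↑Z : Set X) ×ˢ (↑Z' : Set Y)).Finite)
    intro p hp
    exact ⟨(hR1 p hp).1, (hR1 p hp).2⟩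
  -- key distance estimate
  have key : ∀ z w : X, ∀ z' w' : Y, (z, z') ∈ R → (w, w') ∈ R →
      dist z' w' ≤ dist z w + 2 * γ := by
    intro z w z' w' hz hw
    have hmem : |dist z w - dist z' w'| ∈
        {c : ℝ | ∃ p ∈ R, ∃ q ∈ R, c = |dist p.1 q.1 - dist p.2 q.2|} :=
      ⟨(z, z'), hz, (w, w'), hw, rfl⟩
    have hfin : {c : ℝ | ∃ p ∈ R, ∃ q ∈ R, c = |dist p.1 q.1 - dist p.2 q.2|}.Finite := by
      have : {c : ℝ | ∃ p ∈ R, ∃ q ∈ R, c = |dist p.1 q.1 - dist p.2 q.2|} ⊆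
          (fun pq : (X × Y) × (X × Y) => |dist pq.1.1 pq.2.1 - dist pq.1.2 pq.2.2|) ''
            (R ×ˢ R) := by
        rintro c ⟨p, hp, q, hq, rfl⟩
        exact ⟨(p, q), ⟨hp, hq⟩, rfl⟩
      exact Set.Finite.subset ((hRfin.prod hRfin).image _) this
    have hle : |dist z w - dist z' w'| ≤ distortion R :=
      le_csSup hfin.bddAbove hmem
    have h3 : dist z w - dist z' w' ≥ -(2*γ) := (abs_le.mp (le_trans hle hdis)).1
    linarith
  classical
  -- choose f : Z → Z'
  have hex : ∀ z : {x // x ∈ Z}, ∃ z' ∈ Z', ((z : X), z') ∈ R :=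
    fun z => hR2 z z.2
  choose f hf1 hf2 using hex
  set F : {x // x ∈ Z} → {y // y ∈ Z'} := fun z => ⟨f z, hf1 z⟩ with hF
  -- F respects reachability
  have hreach : ∀ a b : {x // x ∈ Z}, (nbhdGraph Z ε).Adj a b →
      (nbhdGraph Z' (ε + 2*γ)).Reachable (F a) (F b) := by
    intro a b hab
    by_cases h : F a = F b
    · rw [h]
    · apply SimpleGraph.Adj.reachable
      refine ⟨h, ?_⟩
      have := key a b (f a) (f b) (hf2 a) (hf2 b)
      have hd : dist (a : X) (b : X) ≤ ε := hab.2
      simp only [hF]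
      calc dist (f a) (f b) ≤ dist (a : X) (b : X) + 2*γ := this
        _ ≤ ε + 2*γ := by linarith
  have hreach2 : ∀ a b : {x // x ∈ Z}, (nbhdGraph Z ε).Walk a b →
      (nbhdGraph Z' (ε + 2*γ)).Reachable (F a) (F b) := by
    intro a b p
    induction p with
    | nil => exact SimpleGraph.Reachable.refl _
    | cons h _ ih => exact (hreach _ _ h).trans ih
  -- induced map on components
  let G : (nbhdGraph Z ε).ConnectedComponent → (nbhdGraph Z' (ε + 2*γ)).ConnectedComponent :=
    SimpleGraph.ConnectedComponent.lift
      (fun a => (nbhdGraph Z' (ε + 2*γ)).connectedComponentMk (F a))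
      (fun a b p _ => SimpleGraph.ConnectedComponent.sound (hreach2 a b p))
  have hGsurj : Function.Surjective G := by
    intro c
    obtain ⟨b, rfl⟩ := c.exists_rep
    obtain ⟨z, hzZ, hzR⟩ := hR3 b b.2
    refine ⟨(nbhdGraph Z ε).connectedComponentMk ⟨z, hzZ⟩, ?_⟩
    apply SimpleGraph.ConnectedComponent.sound
    by_cases h : F ⟨z, hzZ⟩ = b
    · rw [h]
    · apply SimpleGraph.Adj.reachable
      refine ⟨h, ?_⟩
      have := key z z (f ⟨z, hzZ⟩) b (hf2 ⟨z, hzZ⟩) hzR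
      simp only [dist_self, zero_add] at this
      simp only [hF]
      calc dist (f ⟨z, hzZ⟩) (b : Y) ≤ 2*γ := this
        _ ≤ ε + 2*γ := by linarith
  exact Nat.card_le_card_of_surjective G hGsurj
end

section
/- (Claim 2 in the stability proof.) Let Z and Z' be finite nonempty subsets of metric spaces, let γ ≥ 0, and suppose there exists a correspondence R between Z and Z' with distortion dis(R) ≤ 2γ. Then for every ε ≥ 0, β₀^{ε}(Z') ≥ β₀^{ε+2γ}(Z), i.e., the number of connected components of the ε-neighborhood graph on Z' is at least the number of connected components of the (ε+2γ)-neighborhood graph on Z. -/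
/-- Claim 2 in the stability proof: if there is a correspondence between `Z`
and `Z'` of distortion at most `2γ`, then `β₀^ε(Z') ≥ β₀^{ε+2γ}(Z)` for every
`ε ≥ 0`. -/
theorem betti0_claim_two {X Y : Type*} [MetricSpace X] [MetricSpace Y]
    (Z : Finset X) (Z' : Finset Y) (hZ : Z.Nonempty) (hZ' : Z'.Nonempty)
    (γ : ℝ) (hγ : 0 ≤ γ)
    (hcor : ∃ R : Set (X × Y), IsCorrespondence Z Z' R ∧ distortion R ≤ 2 * γ) :
    ∀ ε : ℝ, 0 ≤ ε → betti0 Z (ε + 2 * γ) ≤ betti0 Z' ε := by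
  rintro ε hε
  obtain ⟨R, ⟨hsub, hZR, hZ'R⟩, hdis⟩ := hcor
  -- key distortion bound
  have hbdd : BddAbove {c : ℝ | ∃ p ∈ R, ∃ q ∈ R, c = |dist p.1 q.1 - dist p.2 q.2|} := by
    apply Set.Finite.bddAbove
    apply Set.Finite.subset (Set.Finite.image
      (fun pq : (X × Y) × (X × Y) => |dist pq.1.1 pq.2.1 - dist pq.1.2 pq.2.2|)
      (((Z ×ˢ Z') ×ˢ (Z ×ˢ Z') : Finset ((X × Y) × (X × Y))).finite_toSet))
    rintro c ⟨p, hp, q, hq, rfl⟩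
    refine ⟨(p, q), ?_, rfl⟩
    simp only [Finset.coe_product, Set.mem_prod, Finset.mem_coe]
    exact ⟨⟨(hsub p hp).1, (hsub p hp).2⟩, ⟨(hsub q hq).1, (hsub q hq).2⟩⟩
  have hkey : ∀ p ∈ R, ∀ q ∈ R, |dist p.1 q.1 - dist p.2 q.2| ≤ 2 * γ := by
    intro p hp q hq
    exact le_trans (le_csSup hbdd ⟨p, hp, q, hq, rfl⟩) hdis
  -- choose the map
  choose g hg1 hg2 using hZ'R
  set f : {y // y ∈ Z'} → {x // x ∈ Z} := fun z' => ⟨g z'.1 z'.2, hg1 z'.1 z'.2⟩ with hf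
  -- points related by R are close
  have hclose : ∀ (a : X) (b : Y), (a, b) ∈ R → ∀ (c : X) (d : Y), (c, d) ∈ R →
      dist a c ≤ dist b d + 2 * γ := by
    intro a b hab c d hcd
    have h := abs_le.mp (hkey (a, b) hab (c, d) hcd)
    simp only at h
    linarith [h.1, h.2]
  -- adjacency transfers
  have hwalk : ∀ v w : {y // y ∈ Z'}, (nbhdGraph Z' ε).Walk v w →
      (nbhdGraph Z (ε + 2 * γ)).Reachable (f v) (f w) := by
    intro v w p
    induction p with
    | nil => exact SimpleGraph.Reachable.refl _
    | @cons a b c hab _ ih =>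
      refine SimpleGraph.Reachable.trans ?_ ih
      by_cases hfe : f a = f b
      · rw [hfe]
      · refine SimpleGraph.Adj.reachable ⟨hfe, ?_⟩
        have h1 : dist (f a : X) (f b : X) ≤ dist (a : Y) (b : Y) + 2 * γ :=
          hclose _ _ (hg2 a.1 a.2) _ _ (hg2 b.1 b.2)
        have h2 : dist (a : Y) (b : Y) ≤ ε := hab.2
        calc dist (f a) (f b) = dist (f a : X) (f b : X) := rfl
          _ ≤ dist (a : Y) (b : Y) + 2 * γ := h1
          _ ≤ ε + 2 * γ := by linarith
  have hreach : ∀ v w : {y // y ∈ Z'}, (nbhdGraph Z' ε).Reachable v w →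
      (nbhdGraph Z (ε + 2 * γ)).Reachable (f v) (f w) :=
    fun v w h => h.elim (hwalk v w)
  -- the induced map on components
  set F : (nbhdGraph Z' ε).ConnectedComponent → (nbhdGraph Z (ε + 2 * γ)).ConnectedComponent :=
    Quot.lift (fun v => (nbhdGraph Z (ε + 2 * γ)).connectedComponentMk (f v))
      (fun v w h => SimpleGraph.ConnectedComponent.sound (hreach v w h)) with hF
  have hsurj : Function.Surjective F := by
    intro c
    refine SimpleGraph.ConnectedComponent.ind (fun v => ?_) c
    obtain ⟨z', hz', hvz'⟩ := hZR v.1 v.2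
    refine ⟨(nbhdGraph Z' ε).connectedComponentMk ⟨z', hz'⟩, ?_⟩
    show (nbhdGraph Z (ε + 2 * γ)).connectedComponentMk (f ⟨z', hz'⟩)
        = (nbhdGraph Z (ε + 2 * γ)).connectedComponentMk v
    apply SimpleGraph.ConnectedComponent.sound
    by_cases hfe : f ⟨z', hz'⟩ = v
    · rw [hfe]
    · refine SimpleGraph.Adj.reachable ⟨hfe, ?_⟩
      have h1 : dist (f ⟨z', hz'⟩ : X) (v : X) ≤ dist (z' : Y) (z' : Y) + 2 * γ :=
        hclose _ _ (hg2 z' hz') _ _ hvz'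
      simp only [dist_self, zero_add] at h1
      calc dist (f ⟨z', hz'⟩) (v : {x // x ∈ Z}) = dist (f ⟨z', hz'⟩ : X) (v : X) := rfl
        _ ≤ 2 * γ := h1
        _ ≤ ε + 2 * γ := by linarith
  have : Finite ((nbhdGraph Z' ε).ConnectedComponent) := Quot.finite _
  exact Nat.card_le_card_of_surjective F hsurj
end

section
/- (Stability of the Persistence Exponent.) Let Z and Z' be finite nonempty subsets of metric spaces, and define the interleaving distance between their 0-dimensional Betti curves as d_I(β₀(Z), β₀(Z')) = inf{α > 0 : ∀ ε ≥ 0, β₀^{ε}(Z) ≥ β₀^{ε+α}(Z') and β₀^{ε}(Z') ≥ β₀^{ε+α}(Z)}. If γ ≥ 0 and there exists a correspondence R between Z and Z' with distortion dis(R) ≤ 2γ, then d_I(β₀(Z), β₀(Z')) ≤ 2γ. Consequently, d_I(β₀(Z), β₀(Z')) ≤ inf{dis(R) : R a correspondence between Z and Z'} = 2·d_GH(Z, Z'). -/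
/-- The interleaving distance between the 0-dimensional Betti curves of `Z` and
`Z'`: `d_I = inf {α > 0 : ∀ ε ≥ 0, β₀^ε(Z) ≥ β₀^{ε+α}(Z') and
β₀^ε(Z') ≥ β₀^{ε+α}(Z)}`. -/
noncomputable def interleavingDistBetti {X Y : Type*} [MetricSpace X] [MetricSpace Y]
    (Z : Finset X) (Z' : Finset Y) : ℝ :=
  sInf {α : ℝ | 0 < α ∧ ∀ ε : ℝ, 0 ≤ ε →
    betti0 Z' (ε + α) ≤ betti0 Z ε ∧ betti0 Z (ε + α) ≤ betti0 Z' ε}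

/-- The Gromov-Hausdorff distance between `Z` and `Z'`: half the infimum of the
distortions of all correspondences between `Z` and `Z'`. -/
noncomputable def gromovHausdorffDist {X Y : Type*} [MetricSpace X] [MetricSpace Y]
    (Z : Finset X) (Z' : Finset Y) : ℝ :=
  sInf {c : ℝ | ∃ R : Set (X × Y), IsCorrespondence Z Z' R ∧ distortion R = c} / 2

section Aux

variable {X Y : Type*} [MetricSpace X] [MetricSpace Y]

lemma distortion_bddAbove (Z : Finset X) (Z' : Finset Y) (R : Set (X × Y))
    (hR : ∀ p ∈ R, p.1 ∈ Z ∧ p.2 ∈ Z') :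
    BddAbove {c : ℝ | ∃ p ∈ R, ∃ q ∈ R, c = |dist p.1 q.1 - dist p.2 q.2|} := by
  have hfin : {c : ℝ | ∃ p ∈ R, ∃ q ∈ R, c = |dist p.1 q.1 - dist p.2 q.2|}.Finite := by
    apply Set.Finite.subset (Set.Finite.image
      (f := fun t : (X × Y) × (X × Y) => |dist t.1.1 t.2.1 - dist t.1.2 t.2.2|)
      ((Z.finite_toSet.prod Z'.finite_toSet).prod (Z.finite_toSet.prod Z'.finite_toSet)))
    rintro c ⟨p, hp, q, hq, rfl⟩
    exact ⟨(p, q), ⟨⟨(hR p hp).1, (hR p hp).2⟩, (hR q hq).1, (hR q hq).2⟩, rfl⟩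
  exact hfin.bddAbove

lemma dis_bound {Z : Finset X} {Z' : Finset Y} {R : Set (X × Y)}
    (hR : ∀ p ∈ R, p.1 ∈ Z ∧ p.2 ∈ Z')
    {p q : X × Y} (hp : p ∈ R) (hq : q ∈ R) :
    |dist p.1 q.1 - dist p.2 q.2| ≤ distortion R :=
  le_csSup (distortion_bddAbove Z Z' R hR) ⟨p, hp, q, hq, rfl⟩

lemma distortion_nonneg {Z : Finset X} {Z' : Finset Y} {R : Set (X × Y)}
    (hR : IsCorrespondence Z Z' R) (hZ : Z.Nonempty) : 0 ≤ distortion R := by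
  obtain ⟨z, hz⟩ := hZ
  obtain ⟨z', _, hmem⟩ := hR.2.1 z hz
  have h := dis_bound (p := (z, z')) (q := (z, z')) hR.1 hmem hmem
  simpa using h

lemma betti0_le_of_corr (Z : Finset X) (Z' : Finset Y) (R : Set (X × Y))
    (hR : IsCorrespondence Z Z' R) (ε α : ℝ) (hε : 0 ≤ ε)
    (hd : distortion R ≤ α) :
    betti0 Z' (ε + α) ≤ betti0 Z ε := by
  obtain ⟨hsub, hleft, hright⟩ := hR
  have hch : ∀ z : {x // x ∈ Z}, ∃ z' : {y // y ∈ Z'}, ((z : X), (z' : Y)) ∈ R := by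
    intro z
    obtain ⟨z', hz', hmem⟩ := hleft z z.2
    exact ⟨⟨z', hz'⟩, hmem⟩
  choose f hf using hch
  have hmap : ∀ a b : {x // x ∈ Z}, (nbhdGraph Z ε).Adj a b →
      (nbhdGraph Z' (ε + α)).Reachable (f a) (f b) := by
    intro a b hab
    by_cases h : f a = f b
    · rw [h]
    · apply SimpleGraph.Adj.reachable
      refine ⟨h, ?_⟩
      have h1 := dis_bound (p := ((a : X), (f a : Y))) (q := ((b : X), (f b : Y)))
        hsub (hf a) (hf b)
      have h2 := abs_le.mp h1
      have hab2 : dist (a : X) (b : X) ≤ ε := by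
        have := hab.2
        rwa [Subtype.dist_eq] at this
      rw [Subtype.dist_eq]
      simp only at h2
      linarith [h2.1, h2.2]
  let F : (nbhdGraph Z ε).ConnectedComponent → (nbhdGraph Z' (ε + α)).ConnectedComponent :=
    SimpleGraph.ConnectedComponent.lift
      (fun z => (nbhdGraph Z' (ε + α)).connectedComponentMk (f z))
      (by
        intro v w p hp
        clear hp
        apply SimpleGraph.ConnectedComponent.sound
        induction p with
        | nil => exact SimpleGraph.Reachable.refl _
        | cons h p ih => exact (hmap _ _ h).trans ih)
  have hsurj : Function.Surjective F := by
    intro c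
    refine c.ind (fun z' => ?_)
    obtain ⟨z, hz, hmem⟩ := hright z' z'.2
    refine ⟨(nbhdGraph Z ε).connectedComponentMk ⟨z, hz⟩, ?_⟩
    show (nbhdGraph Z' (ε + α)).connectedComponentMk (f ⟨z, hz⟩) =
      (nbhdGraph Z' (ε + α)).connectedComponentMk z'
    apply SimpleGraph.ConnectedComponent.sound
    have h1 := dis_bound (p := (z, (f ⟨z, hz⟩ : Y))) (q := (z, (z' : Y))) hsub (hf ⟨z, hz⟩) hmem
    simp only [dist_self, zero_sub, sub_zero, abs_neg, abs_dist] at h1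
    by_cases h : f ⟨z, hz⟩ = z'
    · rw [h]
    · apply SimpleGraph.Adj.reachable
      refine ⟨h, ?_⟩
      rw [Subtype.dist_eq]
      linarith
  haveI : Finite (nbhdGraph Z ε).ConnectedComponent := Quot.finite _
  exact Nat.card_le_card_of_surjective F hsurj

lemma isCorrespondence_swap {Z : Finset X} {Z' : Finset Y} {R : Set (X × Y)}
    (hR : IsCorrespondence Z Z' R) :
    IsCorrespondence Z' Z (Prod.swap '' R) := by
  obtain ⟨hsub, hleft, hright⟩ := hR
  refine ⟨?_, ?_, ?_⟩
  · rintro p ⟨q, hq, rfl⟩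
    exact ⟨(hsub q hq).2, (hsub q hq).1⟩
  · intro z' hz'
    obtain ⟨z, hz, hmem⟩ := hright z' hz'
    exact ⟨z, hz, ⟨(z, z'), hmem, rfl⟩⟩
  · intro z hz
    obtain ⟨z', hz', hmem⟩ := hleft z hz
    exact ⟨z', hz', ⟨(z, z'), hmem, rfl⟩⟩

lemma distortion_swap (R : Set (X × Y)) :
    distortion (Prod.swap '' R) = distortion R := by
  unfold distortion
  congr 1
  ext c
  constructor
  · rintro ⟨p, ⟨p', hp', rfl⟩, q, ⟨q', hq', rfl⟩, rfl⟩
    exact ⟨p', hp', q', hq', by simp [abs_sub_comm]⟩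
  · rintro ⟨p, hp, q, hq, rfl⟩
    exact ⟨p.swap, ⟨p, hp, rfl⟩, q.swap, ⟨q, hq, rfl⟩, by simp [abs_sub_comm]⟩

lemma interleaving_le (Z : Finset X) (Z' : Finset Y)
    (hZ : Z.Nonempty) (R : Set (X × Y)) (hR : IsCorrespondence Z Z' R)
    (α : ℝ) (hd : distortion R ≤ α) : interleavingDistBetti Z Z' ≤ α := by
  have h0 : 0 ≤ α := le_trans (distortion_nonneg hR hZ) hd
  have hsub : Set.Ioi α ⊆ {a : ℝ | 0 < a ∧ ∀ ε : ℝ, 0 ≤ ε →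
      betti0 Z' (ε + a) ≤ betti0 Z ε ∧ betti0 Z (ε + a) ≤ betti0 Z' ε} := by
    intro β hβ
    refine ⟨lt_of_le_of_lt h0 hβ, fun ε hε => ⟨?_, ?_⟩⟩
    · exact betti0_le_of_corr Z Z' R hR ε β hε (hd.trans (le_of_lt hβ))
    · exact betti0_le_of_corr Z' Z (Prod.swap '' R) (isCorrespondence_swap hR) ε β hε
        (by rw [distortion_swap]; exact hd.trans (le_of_lt hβ))
  have hbdd : BddBelow {a : ℝ | 0 < a ∧ ∀ ε : ℝ, 0 ≤ ε →
      betti0 Z' (ε + a) ≤ betti0 Z ε ∧ betti0 Z (ε + a) ≤ betti0 Z' ε} :=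
    ⟨0, fun a ha => le_of_lt ha.1⟩
  calc interleavingDistBetti Z Z' ≤ sInf (Set.Ioi α) :=
        csInf_le_csInf hbdd (Set.nonempty_Ioi) hsub
    _ = α := csInf_Ioi

end Aux

/-- Stability of the persistence exponent: if there is a correspondence between
`Z` and `Z'` of distortion at most `2γ`, then the interleaving distance between
the 0-dimensional Betti curves of `Z` and `Z'` is at most `2γ`; consequently it
is at most the infimum of the distortions of all correspondences, which equals
`2 · d_GH(Z, Z')`. -/
theorem stability_of_persistence_exponent
    {X Y : Type*} [MetricSpace X] [MetricSpace Y]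
    (Z : Finset X) (Z' : Finset Y) (hZ : Z.Nonempty) (hZ' : Z'.Nonempty)
    (γ : ℝ) (hγ : 0 ≤ γ)
    (hcor : ∃ R : Set (X × Y), IsCorrespondence Z Z' R ∧ distortion R ≤ 2 * γ) :
    interleavingDistBetti Z Z' ≤ 2 * γ ∧
    interleavingDistBetti Z Z' ≤
      sInf {c : ℝ | ∃ R : Set (X × Y), IsCorrespondence Z Z' R ∧ distortion R = c} ∧
    sInf {c : ℝ | ∃ R : Set (X × Y), IsCorrespondence Z Z' R ∧ distortion R = c} =
      2 * gromovHausdorffDist Z Z' := by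
  obtain ⟨R, hR, hdis⟩ := hcor
  refine ⟨interleaving_le Z Z' hZ R hR _ hdis, ?_, ?_⟩
  · refine le_csInf ⟨distortion R, ⟨R, hR, rfl⟩⟩ ?_
    rintro c ⟨R', hR', rfl⟩
    exact interleaving_le Z Z' hZ R' hR' _ le_rfl
  · unfold gromovHausdorffDist
    ring
end
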